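/- Under the hypotheses of an ℓ-multicover of K_{m+1}: if Γ is not the complete multipartite graph K_{(m+1)[b]}, then μ ≤ (m−1)ℓ. -/

import Mathlib

/-- Under the hypotheses of an `ℓ`-multicover of `K_{m+1}`: if `Γ` is not the complete
multipartite graph `K_{(m+1)[b]}`, then `μ ≤ (m-1)ℓ`. -/
theorem stmt13 {V : Type*} [Fintype V] (Γ : SimpleGraph V) [DecidableRel Γ.Adj]
    (n k l μ m b ℓ : ℕ)
    (hsrg : Γ.IsSRGWith n k l μ) (hconn : Γ.Connected)
    (hnc : ∃ u v : V, u ≠ v ∧ ¬ Γ.Adj u v)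
    (f : V → Fin (m + 1))
    (hsize : ∀ i : Fin (m + 1), ({v : V | f v = i}).ncard = b)
    (hind : ∀ u v : V, Γ.Adj u v → f u ≠ f v)
    (hmc : ∀ (v : V) (i : Fin (m + 1)), f v ≠ i →
      ({w : V | Γ.Adj v w ∧ f w = i}).ncard = ℓ)
    (hb : 2 ≤ b) (hm : 2 ≤ m) (hl : 1 ≤ ℓ)
    (hk : k = ℓ * m) (hn : n = (m + 1) * b)
    (hnotmp : ∃ u v : V, f u ≠ f v ∧ ¬ Γ.Adj u v) :
    μ ≤ (m - 1) * ℓ := by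
  classical
  obtain ⟨u, v, hfuv, hadj⟩ := hnotmp
  have huv : u ≠ v := fun h => hfuv (by rw [h])
  set S : Finset V := Finset.univ.filter (fun w => Γ.Adj u w ∧ Γ.Adj v w) with hSdef
  have hμ : μ = S.card := by
    rw [← hsrg.of_not_adj huv hadj, ← Set.toFinset_card]
    congr 1
    ext w
    rw [Set.mem_toFinset]
    simp [SimpleGraph.commonNeighbors, hSdef]
  set t : Finset (Fin (m + 1)) := Finset.univ \ {f u, f v} with htdef
  have hmem : ∀ x ∈ S, f x ∈ t := by
    intro x hx
    simp only [hSdef, Finset.mem_filter] at hx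
    simp only [htdef, Finset.mem_sdiff, Finset.mem_univ, Finset.mem_insert,
      Finset.mem_singleton, true_and]
    push_neg
    exact ⟨fun h => hind u x hx.2.1 h.symm, fun h => hind v x hx.2.2 h.symm⟩
  have hsplit := Finset.card_eq_sum_card_fiberwise hmem
  have hbound : ∀ i ∈ t, (S.filter (fun a => f a = i)).card ≤ ℓ := by
    intro i hi
    simp only [htdef, Finset.mem_sdiff, Finset.mem_univ, Finset.mem_insert,
      Finset.mem_singleton, true_and] at hi
    push_neg at hi
    have hne : f u ≠ i := fun h => hi.1 h.symm
    have := hmc u i hne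
    rw [Set.ncard_eq_toFinset_card'] at this
    rw [← this]
    apply Finset.card_le_card
    intro x hx
    simp only [hSdef, Finset.mem_filter] at hx
    simp [hx.1.2.1, hx.2]
  have htcard : t.card = m - 1 := by
    rw [htdef, Finset.card_sdiff_of_subset (Finset.subset_univ _)]
    rw [Finset.card_univ, Fintype.card_fin]
    rw [Finset.card_insert_of_notMem (by simpa using hfuv), Finset.card_singleton]
    omega
  calc μ = S.card := hμ
    _ = ∑ i ∈ t, (S.filter (fun a => f a = i)).card := hsplit
    _ ≤ ∑ i ∈ t, ℓ := Finset.sum_le_sum hbound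
    _ = (m - 1) * ℓ := by rw [Finset.sum_const, htcard, smul_eq_mul]
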